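/- Let G be a finite simple graph that admits, under some linear ordering of its vertices, a 2-almost mixed-free adjacency matrix. Then χ(G) ≤ ω(G). -/

import Mathlib

namespace TwPaper


/-- A `{0,1}`-matrix with `m` rows and `n` columns, entries modeled as `Bool`. -/
abbrev BMatrix (m n : ℕ) := Matrix (Fin m) (Fin n) Bool

/-- The submatrix of `M` given by rows `R` and columns `C` is horizontal:
all its rows are constant. -/
def Horizontal {m n : ℕ} (M : BMatrix m n) (R : Set (Fin m)) (C : Set (Fin n)) : Prop :=
  ∀ i ∈ R, ∀ j ∈ C, ∀ j' ∈ C, M i j = M i j'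

/-- The submatrix of `M` given by rows `R` and columns `C` is vertical:
all its columns are constant. -/
def Vertical {m n : ℕ} (M : BMatrix m n) (R : Set (Fin m)) (C : Set (Fin n)) : Prop :=
  ∀ j ∈ C, ∀ i ∈ R, ∀ i' ∈ R, M i j = M i' j

/-- The submatrix of `M` given by rows `R` and columns `C` is mixed:
neither horizontal nor vertical. -/
def Mixed {m n : ℕ} (M : BMatrix m n) (R : Set (Fin m)) (C : Set (Fin n)) : Prop :=
  ¬ Horizontal M R C ∧ ¬ Vertical M R C

/-- The submatrix of `M` given by rows `R` and columns `C` is constant `0`. -/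
def ConstantZero {m n : ℕ} (M : BMatrix m n) (R : Set (Fin m)) (C : Set (Fin n)) : Prop :=
  ∀ i ∈ R, ∀ j ∈ C, M i j = false

/-- A `d`-division of an `m × n` matrix: a partition of the rows into `d` contiguous
nonempty blocks, and likewise for columns.  It is encoded by the monotone surjective
maps sending a row (resp. column) to the index of its block. -/
structure Division (m n d : ℕ) where
  row : Fin m → Fin d
  col : Fin n → Fin d
  row_mono : Monotone row
  col_mono : Monotone col
  row_surj : Function.Surjective row
  col_surj : Function.Surjective col

/-- The `i`-th row block of a division. -/
def Division.rowBlock {m n d : ℕ} (D : Division m n d) (i : Fin d) : Set (Fin m) :=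
  {a | D.row a = i}

/-- The `j`-th column block of a division. -/
def Division.colBlock {m n d : ℕ} (D : Division m n d) (j : Fin d) : Set (Fin n) :=
  {b | D.col b = j}

/-- The zone `D[i,j]` of the division `D` of `M` is mixed. -/
def Division.ZoneMixed {m n d : ℕ} (D : Division m n d) (M : BMatrix m n) (i j : Fin d) : Prop :=
  Mixed M (D.rowBlock i) (D.colBlock j)

/-- A `d`-division is a `d`-almost mixed minor if every off-diagonal zone is mixed. -/
def IsAlmostMixedMinor {m n d : ℕ} (M : BMatrix m n) (D : Division m n d) : Prop :=
  ∀ i j : Fin d, i ≠ j → D.ZoneMixed M i j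

/-- A `d`-division is a `d`-mixed minor if every zone is mixed. -/
def IsMixedMinor {m n d : ℕ} (M : BMatrix m n) (D : Division m n d) : Prop :=
  ∀ i j : Fin d, D.ZoneMixed M i j

/-- `M` is `d`-almost mixed-free: it has no `d`-almost mixed minor. -/
def AlmostMixedFree {m n : ℕ} (d : ℕ) (M : BMatrix m n) : Prop :=
  ¬ ∃ D : Division m n d, IsAlmostMixedMinor M D

/-- `M` is `d`-mixed-free: it has no `d`-mixed minor. -/
def MixedFree {m n : ℕ} (d : ℕ) (M : BMatrix m n) : Prop :=
  ¬ ∃ D : Division m n d, IsMixedMinor M D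

/-- A graphic matrix: symmetric with zero diagonal. -/
def Graphic {n : ℕ} (M : BMatrix n n) : Prop :=
  (∀ i j, M i j = M j i) ∧ (∀ i, M i i = false)

/-- A division of a square matrix is symmetric if rows and columns are
partitioned in exactly the same way. -/
def Division.Symm {n d : ℕ} (D : Division n n d) : Prop := D.row = D.col

/-- `L` is a coarsening of `D`: every row (resp. column) block of `L` is a union of
consecutive row (resp. column) blocks of `D`. -/
def Coarsens {m n d e : ℕ} (L : Division m n e) (D : Division m n d) : Prop :=
  (∀ a a' : Fin m, D.row a = D.row a' → L.row a = L.row a') ∧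
  (∀ b b' : Fin n, D.col b = D.col b' → L.col b = L.col b')

/-- The zone is horizontal and not constant `0`. -/
def HorizNonzero {m n : ℕ} (M : BMatrix m n) (R : Set (Fin m)) (C : Set (Fin n)) : Prop :=
  Horizontal M R C ∧ ¬ ConstantZero M R C

/-- The zone is vertical and not constant `0`. -/
def VertNonzero {m n : ℕ} (M : BMatrix m n) (R : Set (Fin m)) (C : Set (Fin n)) : Prop :=
  Vertical M R C ∧ ¬ ConstantZero M R C

/-- The horizontal compression `G^H_D` of a graphic matrix `M` along a symmetric
division `D` with `s` blocks: vertices are the blocks, and `i j` (for `i < j`) are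
adjacent iff the zone `D[i,j]` is horizontal and not constant `0`. -/
def horizCompression {n s : ℕ} (M : BMatrix n n) (D : Division n n s) : SimpleGraph (Fin s) :=
  SimpleGraph.fromRel (fun i j => i < j ∧ HorizNonzero M (D.rowBlock i) (D.colBlock j))

/-- The vertical compression `G^V_D`. -/
def vertCompression {n s : ℕ} (M : BMatrix n n) (D : Division n n s) : SimpleGraph (Fin s) :=
  SimpleGraph.fromRel (fun i j => i < j ∧ VertNonzero M (D.rowBlock i) (D.colBlock j))

/-- The mixed compression `G^M_D`: `i ≠ j` are adjacent iff the zone `D[i,j]` is mixed. -/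
def mixedCompression {n s : ℕ} (M : BMatrix n n) (D : Division n n s) : SimpleGraph (Fin s) :=
  SimpleGraph.fromRel (fun i j => D.ZoneMixed M i j)

open Classical in
/-- The adjacency matrix of a graph on `Fin s`, rows and columns in the natural order. -/
noncomputable def graphMatrix {s : ℕ} (G : SimpleGraph (Fin s)) : BMatrix s s :=
  fun i j => if G.Adj i j then true else false

open Classical in
/-- The adjacency matrix of `G` under the vertex ordering given by the
enumeration `e` of its vertices. -/
noncomputable def adjMatrix {V : Type*} [Fintype V] (G : SimpleGraph V)
    (e : Fin (Fintype.card V) ≃ V) : BMatrix (Fintype.card V) (Fintype.card V) :=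
  fun i j => if G.Adj (e i) (e j) then true else false

/-- `G` admits, under some linear ordering of its vertices, a `d`-almost mixed-free
adjacency matrix. -/
def AdmitsAMFree {V : Type*} [Fintype V] (d : ℕ) (G : SimpleGraph V) : Prop :=
  ∃ e : Fin (Fintype.card V) ≃ V, AlmostMixedFree d (adjMatrix G e)


-- ===== auxiliary development =====

/-- The graph of a graphic matrix. -/
def graphOf {n : ℕ} (M : BMatrix n n) : SimpleGraph (Fin n) :=
  SimpleGraph.fromRel (fun i j => M i j = true)

lemma graphOf_adj {n : ℕ} {M : BMatrix n n} (hG : Graphic M) {i j : Fin n} :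
    (graphOf M).Adj i j ↔ i ≠ j ∧ M i j = true := by
  simp only [graphOf, SimpleGraph.fromRel_adj, hG.1 j i, or_self]

/-- Condition C: every symmetric-cut block is horizontal or vertical. -/
def CondC {n : ℕ} (M : BMatrix n n) : Prop :=
  ∀ k : ℕ, 0 < k → k < n →
    Horizontal M {i : Fin n | i.val < k} {j : Fin n | k ≤ j.val} ∨
    Vertical M {i : Fin n | i.val < k} {j : Fin n | k ≤ j.val}

lemma condC_of_amf {n : ℕ} {M : BMatrix n n} (hG : Graphic M)
    (h : AlmostMixedFree 2 M) : CondC M := by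
  intro k hk0 hkn
  by_contra hc
  push_neg at hc
  apply h
  have h2 : (1 : Fin 2) ≠ 0 := by decide
  refine ⟨⟨fun x => if x.val < k then 0 else 1, fun x => if x.val < k then 0 else 1,
    ?_, ?_, ?_, ?_⟩, ?_⟩
  · intro a b hab
    have hab' : (a : ℕ) ≤ (b : ℕ) := hab
    dsimp only
    split_ifs with h1 hb hb
    · exact le_refl _
    · exact Fin.zero_le _
    · omega
    · exact le_refl _
  · intro a b hab
    have hab' : (a : ℕ) ≤ (b : ℕ) := hab
    dsimp only
    split_ifs with h1 hb hb
    · exact le_refl _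
    · exact Fin.zero_le _
    · omega
    · exact le_refl _
  · intro y
    fin_cases y
    · exact ⟨⟨0, by omega⟩, by simp [hk0]⟩
    · exact ⟨⟨k, hkn⟩, by simp⟩
  · intro y
    fin_cases y
    · exact ⟨⟨0, by omega⟩, by simp [hk0]⟩
    · exact ⟨⟨k, hkn⟩, by simp⟩
  · have hb0 : {x : Fin n | (if (x:ℕ) < k then (0:Fin 2) else 1) = 0}
        = {i : Fin n | (i:ℕ) < k} := by
      ext x; simp only [Set.mem_setOf_eq]; split_ifs with hx <;> simp [hx, h2]
    have hb1 : {x : Fin n | (if (x:ℕ) < k then (0:Fin 2) else 1) = 1}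
        = {j : Fin n | k ≤ (j:ℕ)} := by
      ext x; simp only [Set.mem_setOf_eq]; split_ifs with hx <;>
        simp [hx, h2, Fin.ext_iff] <;> omega
    have hz01 : Mixed M {i : Fin n | (i:ℕ) < k} {j : Fin n | k ≤ (j:ℕ)} := ⟨hc.1, hc.2⟩
    have hz10 : Mixed M {i : Fin n | k ≤ (i:ℕ)} {j : Fin n | (j:ℕ) < k} := by
      constructor
      · intro hH
        apply hc.2
        intro j hj i hi i' hi'
        have := hH j hj i hi i' hi'
        rw [hG.1 j i, hG.1 j i'] at this
        exact this
      · intro hV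
        apply hc.1
        intro i hi j hj j' hj'
        have := hV i hi j hj j' hj'
        rw [hG.1 j i, hG.1 j' i] at this
        exact this
    intro i j hij
    unfold Division.ZoneMixed Division.rowBlock Division.colBlock
    dsimp only
    fin_cases i <;> fin_cases j
    · exact absurd rfl hij
    · exact (show Mixed M {a : Fin n | (if (a:ℕ) < k then (0:Fin 2) else 1) = 0}
          {b : Fin n | (if (b:ℕ) < k then (0:Fin 2) else 1) = 1} by
        rw [hb0, hb1]; exact hz01)
    · exact (show Mixed M {a : Fin n | (if (a:ℕ) < k then (0:Fin 2) else 1) = 1}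
          {b : Fin n | (if (b:ℕ) < k then (0:Fin 2) else 1) = 0} by
        rw [hb1, hb0]; exact hz10)
    · exact absurd rfl hij

lemma strictMono_val_le {m n : ℕ} {f : Fin m → Fin n} (hf : StrictMono f) :
    ∀ a : Fin m, (a : ℕ) ≤ (f a : ℕ) := by
  intro a
  induction' hv : (a : ℕ) with v ih generalizing a
  · omega
  · have hvm : v < m := by omega
    have h1 : (⟨v, hvm⟩ : Fin m) < a := by simp [Fin.lt_def, hv]
    have := hf h1
    have h2 := ih ⟨v, hvm⟩ rfl
    simp only [Fin.lt_def] at this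
    omega

lemma condC_restrict {m n : ℕ} {M : BMatrix n n} (hC : CondC M) {f : Fin m → Fin n}
    (hf : StrictMono f) : CondC (fun a b => M (f a) (f b)) := by
  intro k hk0 hkm
  set K := (f ⟨k, hkm⟩ : ℕ) with hK
  have hK0 : 0 < K := lt_of_lt_of_le hk0 (strictMono_val_le hf ⟨k, hkm⟩)
  have hKn : K < n := (f ⟨k, hkm⟩).isLt
  have hlt : ∀ a : Fin m, (a : ℕ) < k → (f a : ℕ) < K := by
    intro a ha
    exact hf (show a < ⟨k, hkm⟩ from ha)
  have hge : ∀ b : Fin m, k ≤ (b : ℕ) → K ≤ (f b : ℕ) := by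
    intro b hb
    exact hf.monotone (show (⟨k, hkm⟩ : Fin m) ≤ b from hb)
  rcases hC K hK0 hKn with hH | hV
  · left
    intro a ha b hb b' hb'
    exact hH (f a) (hlt a ha) (f b) (hge b hb) (f b') (hge b' hb')
  · right
    intro b hb a ha a' ha'
    exact hV (f b) (hge b hb) (f a) (hlt a ha) (f a') (hlt a' ha')

/-- Decomposition: constant interval cut, or a uniform vertex. -/
lemma decomp {n : ℕ} {M : BMatrix n n} (hG : Graphic M) (hC : CondC M) (hn : 2 ≤ n) :
    (∃ k : ℕ, 0 < k ∧ k < n ∧ ∃ c, ∀ i j : Fin n, (i : ℕ) < k → k ≤ (j : ℕ) → M i j = c) ∨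
    (∃ v : Fin n, ∃ c, ∀ u : Fin n, u ≠ v → M v u = c) := by
  classical
  set P : ℕ → Prop := fun k => 0 < k ∧
    ∀ j : Fin n, k ≤ (j : ℕ) → ∀ i i' : Fin n, (i : ℕ) < k → (i' : ℕ) < k → M i j = M i' j
    with hP
  have hP1 : P 1 := by
    refine ⟨one_pos, fun j hj i i' hi hi' => ?_⟩
    have : i = i' := Fin.ext (by omega)
    rw [this]
  set k := Nat.findGreatest P (n - 1) with hk
  have hk1 : 1 ≤ k := Nat.le_findGreatest (by omega) hP1
  have hkle : k ≤ n - 1 := Nat.findGreatest_le _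
  have hkP : P k := Nat.findGreatest_spec (by omega : 1 ≤ n - 1) hP1
  by_cases hke : k = n - 1
  · -- last vertex is uniform
    right
    have hn1 : n - 1 < n := by omega
    refine ⟨⟨n - 1, hn1⟩, M ⟨0, by omega⟩ ⟨n - 1, hn1⟩, fun u hu => ?_⟩
    have hu' : (u : ℕ) < n - 1 := by
      have := u.isLt
      have : (u : ℕ) ≠ n - 1 := fun h => hu (Fin.ext h)
      omega
    rw [hG.1]
    have hkP' : P (n - 1) := hke ▸ hkP
    exact hkP'.2 ⟨n - 1, hn1⟩ (by simp) u ⟨0, by omega⟩ hu' (by simp; omega)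
  · have hklt : k < n - 1 := lt_of_le_of_ne hkle hke
    have hnP : ¬ P (k + 1) := Nat.findGreatest_is_greatest (P := P) (n := n - 1) (by omega) (by omega)
    have hH : Horizontal M {i : Fin n | (i : ℕ) < k + 1} {j : Fin n | k + 1 ≤ (j : ℕ)} := by
      rcases hC (k + 1) (by omega) (by omega) with h | h
      · exact h
      · exact absurd ⟨by omega, fun j hj i i' hi hi' => h j hj i hi i' hi'⟩ hnP
    have hVk := hkP.2
    have hkn : k < n := by omega
    have hk1n : k + 1 < n := by omega
    set a := M ⟨0, by omega⟩ ⟨k, hkn⟩ with ha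
    set b := M ⟨k, hkn⟩ ⟨k + 1, hk1n⟩ with hb
    set e := M ⟨0, by omega⟩ ⟨k + 1, hk1n⟩ with he
    have f1 : ∀ i : Fin n, (i : ℕ) < k → M i ⟨k, hkn⟩ = a :=
      fun i hi => hVk ⟨k, hkn⟩ (by simp) i ⟨0, by omega⟩ hi (by simp; omega)
    have f2 : ∀ j : Fin n, k + 1 ≤ (j : ℕ) → M ⟨k, hkn⟩ j = b := by
      intro j hj
      have h1 := hH ⟨k, hkn⟩ (by simp) j hj ⟨k + 1, hk1n⟩ (by simp)
      exact h1
    have f3 : ∀ i j : Fin n, (i : ℕ) < k → k + 1 ≤ (j : ℕ) → M i j = e := by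
      intro i j hi hj
      have h1 : M i j = M ⟨0, by omega⟩ j := hVk j (by omega) i ⟨0, by omega⟩ hi (by simp; omega)
      have h2 := hH ⟨0, by omega⟩ (by simp) j hj ⟨k + 1, hk1n⟩ (by simp)
      rw [h1, h2]
    by_cases hae : a = e
    · -- constant cut at k
      left
      refine ⟨k, by omega, hkn, e, fun i j hi hj => ?_⟩
      by_cases hjk : (j : ℕ) = k
      · have : j = ⟨k, hkn⟩ := Fin.ext hjk
        rw [this, f1 i hi, hae]
      · exact f3 i j hi (by omega)
    · by_cases hbe : b = e
      · -- constant cut at k+1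
        left
        refine ⟨k + 1, by omega, hk1n, e, fun i j hi hj => ?_⟩
        by_cases hik : (i : ℕ) = k
        · have : i = ⟨k, hkn⟩ := Fin.ext hik
          rw [this, f2 j hj, hbe]
        · exact f3 i j (by omega) hj
      · -- vertex k is uniform
        right
        have hab : a = b := by
          rcases Bool.eq_false_or_eq_true a with h1 | h1 <;>
            rcases Bool.eq_false_or_eq_true b with h2 | h2 <;>
              rcases Bool.eq_false_or_eq_true e with h3 | h3 <;> simp only [h1, h2, h3, not_true_eq_false] at hae hbe ⊢
        refine ⟨⟨k, hkn⟩, a, fun u hu => ?_⟩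
        have huk : (u : ℕ) ≠ k := fun h => hu (Fin.ext h)
        by_cases hul : (u : ℕ) < k
        · rw [hG.1]; exact f1 u hul
        · rw [f2 u (by omega), hab]

lemma graphic_restrict {m n : ℕ} {M : BMatrix n n} (hG : Graphic M) (f : Fin m → Fin n) :
    Graphic (fun a b => M (f a) (f b)) :=
  ⟨fun a b => hG.1 _ _, fun a => hG.2 _⟩

lemma isNClique_map {m n p : ℕ} {M : BMatrix n n} (hG : Graphic M)
    {f : Fin m → Fin n} (hinj : Function.Injective f) {S : Finset (Fin m)}
    (hS : (graphOf (fun a b => M (f a) (f b))).IsNClique p S) :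
    (graphOf M).IsNClique p (S.map ⟨f, hinj⟩) := by
  constructor
  · intro x hx y hy hxy
    simp only [Finset.coe_map, Set.mem_image, Finset.mem_coe, Function.Embedding.coeFn_mk] at hx hy
    obtain ⟨a, ha, rfl⟩ := hx
    obtain ⟨b, hb, rfl⟩ := hy
    have hab : a ≠ b := fun h => hxy (by rw [h])
    have hadj := hS.1 ha hb hab
    rw [graphOf_adj (graphic_restrict hG f)] at hadj
    exact (graphOf_adj hG).mpr ⟨hxy, hadj.2⟩
  · rw [Finset.card_map]; exact hS.2

lemma main_induction : ∀ (n : ℕ) (M : BMatrix n n), Graphic M → CondC M →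
    ∃ (m : ℕ) (S : Finset (Fin n)),
      (graphOf M).Colorable m ∧ (graphOf M).IsNClique m S := by
  intro n
  induction n using Nat.strong_induction_on with
  | _ n IH =>
  intro M hG hC
  rcases Nat.lt_or_ge n 2 with h2 | h2
  · interval_cases n
    · exact ⟨0, ∅, ⟨SimpleGraph.Coloring.mk (fun v => v.elim0) (fun {v} _ _ => v.elim0)⟩,
        by simp⟩
    · refine ⟨1, {0}, ⟨SimpleGraph.Coloring.mk (fun _ => 0)
        (fun {v w} h => absurd (Subsingleton.elim v w) ((graphOf M).ne_of_adj h))⟩, by simp⟩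
  rcases decomp hG hC h2 with ⟨k, hk0, hkn, c, hcut⟩ | ⟨v, c, hv⟩
  · -- interval cut with constant value c
    set f₁ : Fin k → Fin n := fun a => ⟨a.val, lt_trans a.isLt hkn⟩ with hf₁
    set f₂ : Fin (n - k) → Fin n := fun a => ⟨k + a.val, by omega⟩ with hf₂
    have hf₁m : StrictMono f₁ := fun a b hab => hab
    have hf₂m : StrictMono f₂ := by
      intro a b hab
      have h' : (a : ℕ) < b := hab
      exact Fin.mk_lt_mk.mpr (by omega)
    obtain ⟨m₁, S₁, ⟨C₁⟩, K₁⟩ := IH k hkn (fun a b => M (f₁ a) (f₁ b))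
      (graphic_restrict hG f₁) (condC_restrict hC hf₁m)
    obtain ⟨m₂, S₂, ⟨C₂⟩, K₂⟩ := IH (n - k) (by omega) (fun a b => M (f₂ a) (f₂ b))
      (graphic_restrict hG f₂) (condC_restrict hC hf₂m)
    have hG₁ := graphic_restrict hG f₁
    have hG₂ := graphic_restrict hG f₂
    have hf₁x : ∀ (x : Fin n) (h : (x : ℕ) < k), f₁ ⟨x, h⟩ = x := fun x h => Fin.ext rfl
    have hf₂x : ∀ (x : Fin n) (h : ¬ (x : ℕ) < k), f₂ ⟨(x : ℕ) - k, by omega⟩ = x := by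
      intro x h; apply Fin.ext; simp only [hf₂]; omega
    -- adjacency transfer for same-side pairs
    have hadj₁ : ∀ (x y : Fin n) (hx : (x : ℕ) < k) (hy : (y : ℕ) < k),
        (graphOf M).Adj x y → (graphOf (fun a b => M (f₁ a) (f₁ b))).Adj ⟨x, hx⟩ ⟨y, hy⟩ := by
      intro x y hx hy hadj
      rw [graphOf_adj hG] at hadj
      refine (graphOf_adj hG₁).mpr ⟨fun h => hadj.1 (by
        rw [← hf₁x x hx, ← hf₁x y hy, h]), ?_⟩
      rw [hf₁x x hx, hf₁x y hy]; exact hadj.2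
    have hadj₂ : ∀ (x y : Fin n) (hx : ¬ (x : ℕ) < k) (hy : ¬ (y : ℕ) < k),
        (graphOf M).Adj x y → (graphOf (fun a b => M (f₂ a) (f₂ b))).Adj
          ⟨(x : ℕ) - k, by omega⟩ ⟨(y : ℕ) - k, by omega⟩ := by
      intro x y hx hy hadj
      rw [graphOf_adj hG] at hadj
      refine (graphOf_adj hG₂).mpr ⟨fun h => hadj.1 (by
        rw [← hf₂x x hx, ← hf₂x y hy]; exact congrArg f₂ h), ?_⟩
      rw [hf₂x x hx, hf₂x y hy]; exact hadj.2
    have hcross : ∀ (x y : Fin n), (x : ℕ) < k → ¬ (y : ℕ) < k → M x y = c :=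
      fun x y hx hy => hcut x y hx (by omega)
    cases c with
    | false =>
      -- disjoint union: colors max m₁ m₂, clique the bigger one
      have hcol : (graphOf M).Colorable (max m₁ m₂) := by
        refine ⟨SimpleGraph.Coloring.mk (fun x =>
          if h : (x : ℕ) < k then Fin.castLE (le_max_left _ _) (C₁ ⟨x, h⟩)
          else Fin.castLE (le_max_right _ _) (C₂ ⟨(x : ℕ) - k, by omega⟩)) ?_⟩
        intro x y hadj
        have hMxy := ((graphOf_adj hG).mp hadj).2
        split_ifs with hx hy hy
        · exact fun hc => C₁.valid (hadj₁ x y hx hy hadj) (Fin.castLE_injective _ hc)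
        · exfalso; rw [hcross x y hx hy] at hMxy; exact Bool.false_ne_true hMxy
        · exfalso; rw [hG.1, hcross y x hy hx] at hMxy; exact Bool.false_ne_true hMxy
        · exact fun hc => C₂.valid (hadj₂ x y hx hy hadj) (Fin.castLE_injective _ hc)
      rcases le_total m₁ m₂ with hm | hm
      · refine ⟨max m₁ m₂, S₂.map ⟨f₂, hf₂m.injective⟩, hcol, ?_⟩
        rw [max_eq_right hm]
        exact isNClique_map hG hf₂m.injective K₂
      · refine ⟨max m₁ m₂, S₁.map ⟨f₁, hf₁m.injective⟩, hcol, ?_⟩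
        rw [max_eq_left hm]
        exact isNClique_map hG hf₁m.injective K₁
    | true =>
      -- join: colors m₁ + m₂, cliques combine
      have hcol : (graphOf M).Colorable (m₁ + m₂) := by
        refine ⟨SimpleGraph.Coloring.mk (fun x =>
          if h : (x : ℕ) < k then Fin.castAdd m₂ (C₁ ⟨x, h⟩)
          else Fin.natAdd m₁ (C₂ ⟨(x : ℕ) - k, by omega⟩)) ?_⟩
        intro x y hadj
        split_ifs with hx hy hy
        · exact fun hc => C₁.valid (hadj₁ x y hx hy hadj) (Fin.castAdd_injective _ _ hc)
        · intro hc
          have h1 : ((Fin.castAdd m₂ (C₁ ⟨x, hx⟩)) : ℕ) < m₁ := by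
            simp [Fin.coe_castAdd]
          rw [hc] at h1
          rw [Fin.coe_natAdd] at h1
          omega
        · intro hc
          have h1 : ((Fin.castAdd m₂ (C₁ ⟨y, hy⟩)) : ℕ) < m₁ := by
            simp [Fin.coe_castAdd]
          rw [← hc] at h1
          rw [Fin.coe_natAdd] at h1
          omega
        · intro hc
          refine C₂.valid (hadj₂ x y hx hy hadj) ?_
          have := congrArg (fun z : Fin (m₁ + m₂) => (z : ℕ)) hc
          simp only [Fin.coe_natAdd] at this
          exact Fin.ext (by omega)
      have T₁ := isNClique_map hG hf₁m.injective K₁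
      have T₂ := isNClique_map hG hf₂m.injective K₂
      have hdisj : Disjoint (S₁.map ⟨f₁, hf₁m.injective⟩) (S₂.map ⟨f₂, hf₂m.injective⟩) := by
        rw [Finset.disjoint_left]
        intro x hx1 hx2
        simp only [Finset.mem_map, Function.Embedding.coeFn_mk] at hx1 hx2
        obtain ⟨a, _, rfl⟩ := hx1
        obtain ⟨b, _, hb⟩ := hx2
        have : k + (b : ℕ) = (a : ℕ) := congrArg Fin.val hb
        have := a.isLt
        omega
      refine ⟨m₁ + m₂, S₁.map ⟨f₁, hf₁m.injective⟩ ∪ S₂.map ⟨f₂, hf₂m.injective⟩, hcol, ?_, ?_⟩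
      · intro x hx y hy hxy
        simp only [Finset.coe_union, Set.mem_union, Finset.mem_coe, Finset.mem_map,
          Function.Embedding.coeFn_mk] at hx hy
        rcases hx with ⟨a, ha, rfl⟩ | ⟨a, ha, rfl⟩ <;> rcases hy with ⟨b, hb, rfl⟩ | ⟨b, hb, rfl⟩
        · exact T₁.1 (Finset.mem_coe.mpr (Finset.mem_map_of_mem _ ha))
            (Finset.mem_coe.mpr (Finset.mem_map_of_mem _ hb)) hxy
        · exact (graphOf_adj hG).mpr ⟨hxy, hcut (f₁ a) (f₂ b) a.isLt (by simp [hf₂])⟩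
        · refine (graphOf_adj hG).mpr ⟨hxy, ?_⟩
          rw [hG.1]
          exact hcut (f₁ b) (f₂ a) b.isLt (by simp [hf₂])
        · exact T₂.1 (Finset.mem_coe.mpr (Finset.mem_map_of_mem _ ha))
            (Finset.mem_coe.mpr (Finset.mem_map_of_mem _ hb)) hxy
      · rw [Finset.card_union_of_disjoint hdisj, Finset.card_map, Finset.card_map, K₁.2, K₂.2]
  · -- uniform vertex v with value c
    set f : Fin (n - 1) → Fin n :=
      fun a => if h : (a : ℕ) < (v : ℕ) then ⟨a, by omega⟩ else ⟨(a : ℕ) + 1, by omega⟩ with hf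
    have hfm : StrictMono f := by
      intro a b hab
      have hab' : (a : ℕ) < b := hab
      simp only [hf]
      split_ifs <;> exact Fin.mk_lt_mk.mpr (by omega)
    have hfv : ∀ a, f a ≠ v := by
      intro a h
      simp only [hf] at h
      split_ifs at h with hc <;>
        (have h' := congrArg Fin.val h; simp only [] at h'; omega)
    have hfs : ∀ u : Fin n, u ≠ v → ∃ a : Fin (n - 1), f a = u := by
      intro u hu
      have huv : (u : ℕ) ≠ (v : ℕ) := fun h => hu (Fin.ext h)
      by_cases h : (u : ℕ) < (v : ℕ)
      · have hv' := v.isLt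
        refine ⟨⟨u, by omega⟩, ?_⟩
        simp only [hf]
        rw [dif_pos (by simpa using h)]
      · have hu' := u.isLt
        refine ⟨⟨(u : ℕ) - 1, by omega⟩, ?_⟩
        simp only [hf]
        rw [dif_neg (by simp; omega)]
        apply Fin.ext; simp; omega
    obtain ⟨m', S', ⟨C'⟩, K'⟩ := IH (n - 1) (by omega) (fun a b => M (f a) (f b))
      (graphic_restrict hG f) (condC_restrict hC hfm)
    have hG' := graphic_restrict hG f
    have hadj' : ∀ (x y : Fin n) (hx : x ≠ v) (hy : y ≠ v), (graphOf M).Adj x y →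
        (graphOf (fun a b => M (f a) (f b))).Adj
          (Classical.choose (hfs x hx)) (Classical.choose (hfs y hy)) := by
      intro x y hx hy hadj
      have hax := Classical.choose_spec (hfs x hx)
      have hay := Classical.choose_spec (hfs y hy)
      rw [graphOf_adj hG] at hadj
      refine (graphOf_adj hG').mpr ⟨fun h => hadj.1 (by rw [← hax, ← hay, h]), ?_⟩
      rw [hax, hay]; exact hadj.2
    cases c with
    | false =>
      -- v is isolated
      refine ⟨m', S'.map ⟨f, hfm.injective⟩, ?_, isNClique_map hG hfm.injective K'⟩
      refine ⟨SimpleGraph.Coloring.mk (fun x =>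
        if h : x = v then C' ⟨0, by omega⟩ else C' (Classical.choose (hfs x h))) ?_⟩
      intro x y hadj
      have hMxy := ((graphOf_adj hG).mp hadj).2
      split_ifs with hx hy hy
      · exact absurd (hx.trans hy.symm) ((graphOf M).ne_of_adj hadj)
      · exfalso
        rw [hx, hv y (fun h => hy h)] at hMxy
        exact Bool.false_ne_true hMxy
      · exfalso
        rw [hy, hG.1, hv x (fun h => hx h)] at hMxy
        exact Bool.false_ne_true hMxy
      · exact C'.valid (hadj' x y hx hy hadj)
    | true =>
      -- v is dominating
      have T' := isNClique_map hG hfm.injective K'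
      have hvnot : v ∉ S'.map ⟨f, hfm.injective⟩ := by
        rw [Finset.mem_map]
        rintro ⟨a, _, ha⟩
        exact hfv a ha
      refine ⟨m' + 1, insert v (S'.map ⟨f, hfm.injective⟩), ?_, ?_, ?_⟩
      · refine ⟨SimpleGraph.Coloring.mk (fun x =>
          if h : x = v then Fin.last m'
          else (C' (Classical.choose (hfs x h))).castSucc) ?_⟩
        intro x y hadj
        split_ifs with hx hy hy
        · exact absurd (hx.trans hy.symm) ((graphOf M).ne_of_adj hadj)
        · exact fun hc => (Fin.castSucc_lt_last _).ne' hc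
        · exact fun hc => (Fin.castSucc_lt_last _).ne hc
        · exact fun hc => C'.valid (hadj' x y hx hy hadj) (Fin.castSucc_injective _ hc)
      · intro x hx y hy hxy
        simp only [Finset.coe_insert, Set.mem_insert_iff, Finset.mem_coe] at hx hy
        rcases hx with rfl | hx <;> rcases hy with rfl | hy
        · exact absurd rfl hxy
        · refine (graphOf_adj hG).mpr ⟨hxy, ?_⟩
          rcases Finset.mem_map.mp hy with ⟨b, _, rfl⟩
          exact hv (f b) (hfv b)
        · refine (graphOf_adj hG).mpr ⟨hxy, ?_⟩
          rcases Finset.mem_map.mp hx with ⟨a, _, rfl⟩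
          rw [hG.1]
          exact hv (f a) (hfv a)
        · exact T'.1 hx hy hxy
      · rw [Finset.card_insert_of_notMem hvnot, Finset.card_map, K'.2]



/-- Every finite simple graph admitting, under some linear ordering
of its vertices, a `2`-almost mixed-free adjacency matrix satisfies `χ(G) ≤ ω(G)`. -/
theorem amfree_two_perfect {V : Type} [Fintype V] (G : SimpleGraph V)
    (h : AdmitsAMFree 2 G) :
    G.chromaticNumber ≤ (G.cliqueNum : ℕ∞) := by
  obtain ⟨e, hfree⟩ := h
  set M : BMatrix (Fintype.card V) (Fintype.card V) := adjMatrix G e with hM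
  have hG : Graphic M := by
    constructor
    · intro i j
      by_cases hh : G.Adj (e i) (e j)
      · simp [hM, adjMatrix, hh, hh.symm]
      · have h2 : ¬ G.Adj (e j) (e i) := fun hx => hh hx.symm
        simp [hM, adjMatrix, hh, h2]
    · intro i; simp [hM, adjMatrix]
  have hC : CondC M := condC_of_amf hG hfree
  obtain ⟨m, S, ⟨C⟩, K⟩ := main_induction _ M hG hC
  have hadj_iff : ∀ i j, (graphOf M).Adj i j ↔ G.Adj (e i) (e j) := by
    intro i j
    rw [graphOf_adj hG]
    constructor
    · rintro ⟨hne, hMij⟩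
      by_cases hh : G.Adj (e i) (e j)
      · exact hh
      · exfalso
        simp [hM, adjMatrix, hh] at hMij
    · intro hh
      exact ⟨fun hij => G.ne_of_adj hh (by rw [hij]), by simp [hM, adjMatrix, hh]⟩
  have hcol : G.Colorable m := by
    refine ⟨SimpleGraph.Coloring.mk (fun x => C (e.symm x)) ?_⟩
    intro x y hxy
    apply C.valid
    rw [hadj_iff]
    simpa using hxy
  have hclique : G.IsClique (S.map e.toEmbedding) := by
    intro x hx y hy hne
    simp only [Finset.coe_map, Set.mem_image, Finset.mem_coe] at hx hy
    obtain ⟨a, ha, rfl⟩ := hx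
    obtain ⟨b, hb, rfl⟩ := hy
    have hab : a ≠ b := fun hh => hne (by rw [hh])
    exact (hadj_iff a b).mp (K.1 ha hb hab)
  have hle : m ≤ G.cliqueNum := by
    have h2 := hclique.card_le_cliqueNum
    rwa [Finset.card_map, K.2] at h2
  exact le_trans hcol.chromaticNumber_le (Nat.cast_le.mpr hle)


end TwPaper
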